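/- arXiv:2010.15494 — 4 statements merged into one kernel-verified Lean document; each statement's English description precedes it below -/
import Mathlib

section
/- For the Gauss–Kuzmin measure dμ(x) = dx/((1+x) log 2) on [0,1] and complex s with 0 < Re(s) < 1, the Mellin-type integral ∫₀¹ ⌊1/x⌋^s dμ(x) equals (1/log 2)·( ζ(2−s) + H(s) ), where H(s) = ∑_{n≥1} n^s ( log(1 + 1/(n(n+2))) − 1/n² ) and ζ is the Riemann zeta function. -/
open MeasureTheory Set Real

noncomputable def gks (s : ℂ) (x : ℝ) : ℂ :=
  (⌊1 / x⌋ : ℂ) ^ s * ((1 / ((1 + x) * Real.log 2) : ℝ) : ℂ)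

lemma measurable_gks (s : ℂ) : Measurable (gks s) := by
  apply Measurable.mul
  · exact (measurable_from_top (f := fun n : ℤ => (n : ℂ) ^ s)).comp
      ((measurable_const.div measurable_id).floor)
  · exact Complex.measurable_ofReal.comp (by fun_prop)

lemma norm_gks_le (s : ℂ) (h0 : 0 < s.re) {x : ℝ} (hx : x ∈ Set.Ioo (0:ℝ) 1) :
    ‖gks s x‖ ≤ x ^ (-s.re) * (Real.log 2)⁻¹ := by
  obtain ⟨hx0, hx1⟩ := hx
  have hlog : 0 < Real.log 2 := Real.log_pos (by norm_num)
  have h1x : 1 ≤ 1 / x := (le_div_iff₀ hx0).mpr (by linarith)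
  have hfl1 : (1 : ℤ) ≤ ⌊1 / x⌋ := Int.le_floor.mpr (by exact_mod_cast h1x)
  have hflpos : (0 : ℝ) < (⌊1 / x⌋ : ℝ) := by exact_mod_cast hfl1.trans_lt' (by norm_num)
  rw [gks, norm_mul]
  have hb1 : ‖(⌊1 / x⌋ : ℂ) ^ s‖ ≤ x ^ (-s.re) := by
    have : ((⌊1 / x⌋ : ℤ) : ℂ) = (((⌊1 / x⌋ : ℤ) : ℝ) : ℂ) := by push_cast; ring
    rw [this, Complex.norm_cpow_eq_rpow_re_of_pos hflpos]
    calc ((⌊1 / x⌋ : ℤ) : ℝ) ^ s.re ≤ (1 / x) ^ s.re :=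
          Real.rpow_le_rpow hflpos.le (Int.floor_le _) h0.le
      _ = x ^ (-s.re) := by
          rw [one_div, Real.inv_rpow hx0.le, ← Real.rpow_neg hx0.le]
  have hb2 : ‖((1 / ((1 + x) * Real.log 2) : ℝ) : ℂ)‖ ≤ (Real.log 2)⁻¹ := by
    rw [Complex.norm_real, Real.norm_eq_abs, abs_of_nonneg (by positivity)]
    rw [one_div]
    apply inv_anti₀ hlog
    nlinarith
  calc ‖(⌊1 / x⌋ : ℂ) ^ s‖ * ‖((1 / ((1 + x) * Real.log 2) : ℝ) : ℂ)‖
      ≤ x ^ (-s.re) * (Real.log 2)⁻¹ := by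
        apply mul_le_mul hb1 hb2 (norm_nonneg _) (by positivity)

lemma integrableOn_gks (s : ℂ) (h0 : 0 < s.re) (h1 : s.re < 1) :
    IntegrableOn (gks s) (Set.Ioo (0:ℝ) 1) := by
  have hb : IntegrableOn (fun x : ℝ => x ^ (-s.re) * (Real.log 2)⁻¹) (Set.Ioo (0:ℝ) 1) := by
    have h := (intervalIntegral.intervalIntegrable_rpow' (a := 0) (b := 1)
      (r := -s.re) (by linarith)).mul_const (Real.log 2)⁻¹
    rw [intervalIntegrable_iff_integrableOn_Ioc_of_le (by norm_num)] at h
    exact h.mono_set Set.Ioo_subset_Ioc_self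
  refine Integrable.mono' hb ((measurable_gks s).aestronglyMeasurable) ?_
  filter_upwards [ae_restrict_mem measurableSet_Ioo] with x hx
  exact norm_gks_le s h0 hx

lemma piece_integral (s : ℂ) (n : ℕ) :
    ∫ x in Set.Ioc (1/((n:ℝ)+2)) (1/((n:ℝ)+1)), gks s x
      = ((n:ℂ)+1)^s *
        ((Real.log (1 + 1/(((n:ℝ)+1)*((n:ℝ)+3))) : ℂ) / (Real.log 2 : ℂ)) := by
  set a : ℝ := 1/((n:ℝ)+2) with ha
  set b : ℝ := 1/((n:ℝ)+1) with hb
  have hn1 : (0:ℝ) < (n:ℝ)+1 := by positivity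
  have hn2 : (0:ℝ) < (n:ℝ)+2 := by positivity
  have ha0 : 0 < a := by positivity
  have hab : a ≤ b := by
    rw [ha, hb]
    apply one_div_le_one_div_of_le hn1; linarith
  have hfl : ∀ x ∈ Set.Ioc a b, ⌊1/x⌋ = ((n:ℤ)+1) := by
    intro x ⟨hax, hxb⟩
    have hx0 : 0 < x := ha0.trans hax
    rw [Int.floor_eq_iff]
    constructor
    · push_cast
      rw [le_div_iff₀ hx0]
      calc ((n:ℝ)+1) * x ≤ ((n:ℝ)+1) * b := by nlinarith
        _ = 1 := by rw [hb]; field_simp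
    · push_cast
      rw [div_lt_iff₀ hx0]
      calc (1:ℝ) = ((n:ℝ)+2) * a := by rw [ha]; field_simp
        _ < ((n:ℝ)+1+1) * x := by nlinarith
  have hcong : ∫ x in Set.Ioc a b, gks s x
      = ∫ x in Set.Ioc a b, ((n:ℂ)+1)^s * ((1 / ((1 + x) * Real.log 2) : ℝ) : ℂ) := by
    apply setIntegral_congr_fun measurableSet_Ioc
    intro x hx
    rw [gks, hfl x hx]
    push_cast
    ring_nf
  rw [hcong, MeasureTheory.integral_const_mul, ← intervalIntegral.integral_of_le hab,
    intervalIntegral.integral_ofReal]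
  congr 1
  have key : (∫ x in a..b, 1 / ((1 + x) * Real.log 2))
      = Real.log (1 + 1/(((n:ℝ)+1)*((n:ℝ)+3))) / Real.log 2 := by
    have : ∀ x : ℝ, 1 / ((1 + x) * Real.log 2) = (Real.log 2)⁻¹ * (1/(1+x)) := by
      intro x; field_simp
    simp_rw [this]
    rw [intervalIntegral.integral_const_mul]
    have hsub : (∫ x in a..b, 1/(1+x)) = ∫ x in (1+a)..(1+b), 1/x := by
      rw [← intervalIntegral.integral_comp_add_left (fun x => 1/x) 1]
    have hb0 : 0 < b := by positivity
    rw [hsub, integral_one_div (Set.notMem_uIcc_of_lt (by linarith) (by linarith))]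
    have harg : (1+b)/(1+a) = 1 + 1/(((n:ℝ)+1)*((n:ℝ)+3)) := by
      rw [ha, hb]
      have h3 : (0:ℝ) < (n:ℝ)+3 := by positivity
      field_simp
      ring
    rw [harg, mul_comm, div_eq_mul_inv]
    ring
  rw [key]
  push_cast
  ring

lemma gks_union_eq :
    (⋃ n : ℕ, Set.Ioc (1/((n:ℝ)+2)) (1/((n:ℝ)+1))) = Set.Ioc (0:ℝ) 1 := by
  ext x
  simp only [Set.mem_iUnion, Set.mem_Ioc]
  constructor
  · rintro ⟨n, h1, h2⟩
    have hn1 : (0:ℝ) < (n:ℝ)+1 := by positivity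
    have hn2 : (0:ℝ) < (n:ℝ)+2 := by positivity
    constructor
    · exact lt_trans (by positivity) h1
    · calc x ≤ 1/((n:ℝ)+1) := h2
        _ ≤ 1 := by rw [div_le_one hn1]; linarith
  · rintro ⟨hx0, hx1⟩
    have h1x : 1 ≤ 1/x := (le_div_iff₀ hx0).mpr (by linarith)
    have hm1 : (1:ℤ) ≤ ⌊1/x⌋ := Int.le_floor.mpr (by exact_mod_cast h1x)
    refine ⟨(⌊1/x⌋ - 1).toNat, ?_, ?_⟩ <;>
    · have hz : ((⌊1/x⌋ - 1).toNat : ℤ) = ⌊1/x⌋ - 1 := Int.toNat_of_nonneg (by omega)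
      have hcast : (((⌊1/x⌋ - 1).toNat : ℕ) : ℝ) = (⌊1/x⌋ : ℝ) - 1 := by
        exact_mod_cast congrArg (fun z : ℤ => (z : ℝ)) hz
      have hF : (1:ℝ) ≤ (⌊1/x⌋ : ℝ) := by exact_mod_cast hm1
      have hfl : ((⌊1/x⌋ : ℝ)) ≤ 1/x := Int.floor_le _
      have hlt : (1:ℝ)/x < (⌊1/x⌋ : ℝ) + 1 := Int.lt_floor_add_one _
      rw [hcast]
      first
      | · have h2 : (⌊1/x⌋:ℝ) - 1 + 2 = (⌊1/x⌋:ℝ) + 1 := by ring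
          rw [h2, div_lt_iff₀ (by linarith)]
          have := (div_lt_iff₀ hx0).mp hlt
          linarith
      | · have h2 : (⌊1/x⌋:ℝ) - 1 + 1 = (⌊1/x⌋:ℝ) := by ring
          rw [h2, le_div_iff₀ (by linarith)]
          have := (le_div_iff₀ hx0).mp hfl
          linarith

lemma gks_pdisj :
    Pairwise (Function.onFun Disjoint fun n : ℕ => Set.Ioc (1/((n:ℝ)+2)) (1/((n:ℝ)+1))) := by
  intro m n hmn
  have key : ∀ p q : ℕ, p < q →
      Disjoint (Set.Ioc (1/((p:ℝ)+2)) (1/((p:ℝ)+1))) (Set.Ioc (1/((q:ℝ)+2)) (1/((q:ℝ)+1))) := by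
    intro p q hpq
    rw [Set.Ioc_disjoint_Ioc]
    have h1 : 1/((q:ℝ)+1) ≤ 1/((p:ℝ)+2) := by
      apply one_div_le_one_div_of_le (by positivity)
      have : (p:ℝ) + 1 ≤ (q:ℝ) := by exact_mod_cast Nat.succ_le_of_lt hpq
      linarith
    exact le_trans (min_le_right _ _) (le_trans h1 (le_max_left _ _))
  rcases hmn.lt_or_gt with h | h
  · exact key m n h
  · exact (key n m h).symm

lemma log_sub_bound (n : ℕ) :
    |Real.log (1 + 1/(((n:ℝ)+1)*((n:ℝ)+3))) - 1/((n:ℝ)+1)^2| ≤ 3/((n:ℝ)+1)^3 := by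
  have hc1 : (1:ℝ) ≤ (n:ℝ)+1 := by
    have : (0:ℝ) ≤ (n:ℝ) := Nat.cast_nonneg n
    linarith
  set c : ℝ := (n:ℝ)+1 with hc
  have hd : (n:ℝ)+3 = c+2 := by rw [hc]; ring
  rw [hd]
  set x : ℝ := 1/(c*(c+2)) with hx
  set y : ℝ := 1/c^2 with hy
  have hc0 : (0:ℝ) < c := by linarith
  have hx0 : 0 < x := by rw [hx]; positivity
  have hL_le : Real.log (1+x) ≤ x := by
    have := Real.log_le_sub_one_of_pos (show (0:ℝ) < 1+x by linarith)
    linarith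
  have hL_ge : x - x^2 ≤ Real.log (1+x) := by
    have h := Real.log_le_sub_one_of_pos (show (0:ℝ) < (1+x)⁻¹ by positivity)
    rw [Real.log_inv] at h
    have hinv : (1+x) * (1+x)⁻¹ = 1 := mul_inv_cancel₀ (by linarith)
    nlinarith [sq_nonneg x, pow_pos hx0 3]
  have hxy : x ≤ y := by
    rw [hx, hy]
    gcongr
    nlinarith
  have hyx : y - x ≤ 2/c^3 := by
    have h1 : y - x = 2/(c^2*(c+2)) := by rw [hx, hy]; field_simp; ring
    rw [h1]
    gcongr
    nlinarith
  have hx2 : x^2 ≤ 1/c^3 := by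
    have h1 : x^2 = 1/(c^2*(c+2)^2) := by rw [hx]; field_simp
    rw [h1]
    gcongr
    nlinarith
  have hb3 : (0:ℝ) ≤ 3/c^3 := by positivity
  clear_value c x y
  have e1 : (2:ℝ) / c ^ 3 = 2 * (1 / c ^ 3) := by ring
  have e2 : (3:ℝ) / c ^ 3 = 3 * (1 / c ^ 3) := by ring
  rw [e1] at hyx
  rw [e2] at hb3 ⊢
  rw [abs_le]
  constructor
  · linarith
  · linarith

lemma summable_B (s : ℂ) (h1 : s.re < 1) :
    Summable (fun n : ℕ => ((n:ℂ)+1)^s *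
      ((Real.log (1 + 1/(((n:ℝ)+1)*((n:ℝ)+3))) : ℂ) - 1/((n:ℂ)+1)^2)) := by
  have hsum : Summable (fun n : ℕ => 3/((n:ℝ)+1)^2) := by
    have h := (Real.summable_one_div_nat_pow (p := 2)).mpr (by norm_num)
    have h2 := (h.comp_injective Nat.succ_injective).mul_left 3
    apply h2.congr
    intro n
    simp [Function.comp, Nat.succ_eq_add_one]
    push_cast
    ring
  apply Summable.of_norm_bounded hsum
  intro n
  have hc1 : (1:ℝ) ≤ (n:ℝ)+1 := by
    have : (0:ℝ) ≤ (n:ℝ) := Nat.cast_nonneg n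
    linarith
  have hcast : ((n:ℂ)+1) = (((n:ℝ)+1 : ℝ) : ℂ) := by push_cast; ring
  rw [norm_mul]
  have hb1 : ‖((n:ℂ)+1)^s‖ ≤ (n:ℝ)+1 := by
    rw [hcast, Complex.norm_cpow_eq_rpow_re_of_pos (by linarith)]
    calc ((n:ℝ)+1) ^ s.re ≤ ((n:ℝ)+1) ^ (1:ℝ) :=
          Real.rpow_le_rpow_of_exponent_le hc1 (by linarith)
      _ = (n:ℝ)+1 := Real.rpow_one _
  have hb2 : ‖((Real.log (1 + 1/(((n:ℝ)+1)*((n:ℝ)+3))) : ℂ) - 1/((n:ℂ)+1)^2)‖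
      ≤ 3/((n:ℝ)+1)^3 := by
    have hre : ((Real.log (1 + 1/(((n:ℝ)+1)*((n:ℝ)+3))) : ℂ) - 1/((n:ℂ)+1)^2)
        = ((Real.log (1 + 1/(((n:ℝ)+1)*((n:ℝ)+3))) - 1/((n:ℝ)+1)^2 : ℝ) : ℂ) := by
      push_cast; ring
    rw [hre, Complex.norm_real, Real.norm_eq_abs]
    exact log_sub_bound n
  calc ‖((n:ℂ)+1)^s‖ * ‖((Real.log (1 + 1/(((n:ℝ)+1)*((n:ℝ)+3))) : ℂ) - 1/((n:ℂ)+1)^2)‖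
      ≤ ((n:ℝ)+1) * (3/((n:ℝ)+1)^3) :=
        mul_le_mul hb1 hb2 (norm_nonneg _) (by linarith)
    _ = 3/((n:ℝ)+1)^2 := by field_simp

lemma summable_A (s : ℂ) (h1 : s.re < 1) :
    Summable (fun n : ℕ => 1/((n:ℂ)+1)^((2:ℂ)-s)) := by
  have h : (1:ℝ) < ((2:ℂ)-s).re := by
    simp [Complex.sub_re]
    linarith
  have := (Complex.summable_one_div_nat_cpow.mpr h).comp_injective Nat.succ_injective
  apply this.congr
  intro n
  simp [Function.comp, Nat.succ_eq_add_one]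

theorem stmt_9 (s : ℂ) (h0 : 0 < s.re) (h1 : s.re < 1) :
    ∫ x in Set.Ioo (0:ℝ) 1,
        ((⌊1 / x⌋ : ℂ) ^ s * ((1 / ((1 + x) * Real.log 2) : ℝ) : ℂ)) =
      (1 / (Real.log 2 : ℂ)) *
        (riemannZeta (2 - s) +
          ∑' n : ℕ, ((n : ℂ) + 1) ^ s *
            ((Real.log (1 + 1 / (((n : ℝ) + 1) * ((n : ℝ) + 3))) : ℂ) -
              1 / ((n : ℂ) + 1) ^ 2)) := by
  have hset : (∫ x in Set.Ioo (0:ℝ) 1, gks s x)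
      = ∑' n : ℕ, ∫ x in Set.Ioc (1/((n:ℝ)+2)) (1/((n:ℝ)+1)), gks s x := by
    rw [← MeasureTheory.integral_Ioc_eq_integral_Ioo, ← gks_union_eq,
      MeasureTheory.integral_iUnion (fun n => measurableSet_Ioc) gks_pdisj ?_]
    rw [gks_union_eq]
    exact (integrableOn_gks s h0 h1).congr_set_ae (MeasureTheory.Ioo_ae_eq_Ioc).symm
  show (∫ x in Set.Ioo (0:ℝ) 1, gks s x) = _
  rw [hset]
  simp_rw [piece_integral s]
  rw [zeta_eq_tsum_one_div_nat_add_one_cpow (by simp [Complex.sub_re]; linarith)]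
  rw [← Summable.tsum_add (summable_A s h1) (summable_B s h1), ← tsum_mul_left]
  apply tsum_congr
  intro n
  have hz : ((n:ℂ)+1) ≠ 0 := by
    have := Nat.cast_add_one_ne_zero (R := ℂ) n
    exact_mod_cast this
  have hA : 1/((n:ℂ)+1)^((2:ℂ)-s) = ((n:ℂ)+1)^s * (1/((n:ℂ)+1)^2) := by
    rw [Complex.cpow_sub _ _ hz]
    have h2 : ((n:ℂ)+1)^(2:ℂ) = ((n:ℂ)+1)^(2:ℕ) := by
      rw [← Complex.cpow_natCast]; norm_num
    rw [h2]
    field_simp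
  rw [hA]
  ring
end

section
/- There exists a constant C such that for all t ∈ (0, 1/2), ∫₀¹ |e^{i t ⌊1/x⌋} − 1| dx ≤ C · t · |log t|. -/
open MeasureTheory Real

lemma exp_I_sub_one_le (u γ : ℝ) (hu : 0 ≤ u) (hγ0 : 0 < γ) (hγ1 : γ ≤ 1) :
    ‖Complex.exp (Complex.I * u) - 1‖ ≤ 2 * u ^ γ := by
  rcases le_or_gt u 1 with h | h
  · have h1 : ‖Complex.I * (u:ℂ)‖ ≤ 1 := by
      simpa [abs_of_nonneg hu] using h
    have := Complex.norm_exp_sub_one_le h1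
    have h2 : ‖Complex.I * (u:ℂ)‖ = u := by simp [abs_of_nonneg hu]
    rw [h2] at this
    refine le_trans (by simpa using this) ?_
    have : u ^ (1:ℝ) ≤ u ^ γ := by
      rcases eq_or_lt_of_le hu with h0 | h0
      · rcases eq_or_lt_of_le hγ1 with h3 | h3
        · simp [← h0, h3]
        · simp [← h0, Real.zero_rpow hγ0.ne', Real.zero_rpow (by norm_num : (1:ℝ) ≠ 0)]
      · exact Real.rpow_le_rpow_of_exponent_ge h0 h hγ1
    simpa using mul_le_mul_of_nonneg_left this (by norm_num : (0:ℝ) ≤ 2)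
  · have h1 : ‖Complex.exp (Complex.I * u) - 1‖ ≤ 2 := by
      calc ‖Complex.exp (Complex.I * u) - 1‖ ≤ ‖Complex.exp (Complex.I * u)‖ + ‖(1:ℂ)‖ :=
            norm_sub_le _ _
        _ ≤ 2 := by
            rw [Complex.norm_exp]
            simp; norm_num
    refine h1.trans ?_
    have : (1:ℝ) ≤ u ^ γ := Real.one_le_rpow h.le hγ0.le
    linarith

theorem stmt_12 : ∃ C : ℝ, ∀ t ∈ Set.Ioo (0:ℝ) (1/2),
    (∫ x in Set.Ioo (0:ℝ) 1,
        ‖Complex.exp (Complex.I * (t : ℂ) * (⌊1 / x⌋ : ℂ)) - 1‖) ≤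
      C * t * |Real.log t| := by
  refine ⟨2 * Real.exp 1 * (1 + (Real.log 2)⁻¹), ?_⟩
  rintro t ⟨ht0, ht2⟩
  have ht1 : t < 1 := ht2.trans (by norm_num)
  have hlogt : Real.log t < 0 := Real.log_neg ht0 ht1
  set L : ℝ := -Real.log t with hL
  have hLabs : |Real.log t| = L := abs_of_neg hlogt
  have hlog2 : (0:ℝ) < Real.log 2 := Real.log_pos (by norm_num)
  have hL2 : Real.log 2 < L := by
    have := Real.log_lt_log ht0 ht2
    rw [show (1:ℝ)/2 = 2⁻¹ by norm_num, Real.log_inv] at this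
    linarith
  have hLpos : 0 < L := hlog2.trans hL2
  set γ : ℝ := 1 - 1 / (1 + L) with hγ
  have h1L : 0 < 1 + L := by linarith
  have hγ0 : 0 < γ := by
    have : 1 / (1 + L) < 1 := by rw [div_lt_one h1L]; linarith
    simp only [hγ]; linarith
  have hγ1 : γ < 1 := by
    have : 0 < 1 / (1 + L) := by positivity
    simp only [hγ]; linarith
  -- t ^ γ ≤ e * t
  have htγ : t ^ γ ≤ Real.exp 1 * t := by
    have : t ^ γ = Real.exp (γ * Real.log t) := by
      rw [Real.rpow_def_of_pos ht0, mul_comm]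
    rw [this]
    have hexp : γ * Real.log t = Real.log t + L / (1 + L) := by
      have : Real.log t = -L := by simp [hL]
      rw [this, hγ]; field_simp; ring
    rw [hexp, Real.exp_add]
    have h2 : Real.exp (L / (1 + L)) ≤ Real.exp 1 :=
      Real.exp_le_exp.2 (by rw [div_le_one h1L]; linarith)
    calc Real.exp (Real.log t) * Real.exp (L / (1 + L))
        ≤ Real.exp (Real.log t) * Real.exp 1 :=
          mul_le_mul_of_nonneg_left h2 (Real.exp_pos _).le
      _ = Real.exp 1 * t := by rw [Real.exp_log ht0]; ring
  -- the bounding function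
  set g : ℝ → ℝ := fun x => 2 * t ^ γ * x ^ (-γ) with hg
  have hγ1' : -1 < -γ := by linarith
  have hgint : IntegrableOn g (Set.Ioo (0:ℝ) 1) := by
    have := (intervalIntegral.intervalIntegrable_rpow' hγ1' (a := 0) (b := 1))
    rw [intervalIntegrable_iff_integrableOn_Ioo_of_le (by norm_num : (0:ℝ) ≤ 1)] at this
    exact (this.const_mul (2 * t ^ γ))
  -- pointwise bound
  have hpt : ∀ x ∈ Set.Ioo (0:ℝ) 1,
      ‖Complex.exp (Complex.I * (t : ℂ) * (⌊1 / x⌋ : ℂ)) - 1‖ ≤ g x := by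
    rintro x ⟨hx0, hx1⟩
    have hxinv : 1 < 1 / x := by rw [lt_div_iff₀ hx0]; linarith
    have hfl1 : (1:ℤ) ≤ ⌊1 / x⌋ := by
      have := Int.le_floor.2 (le_of_lt (by exact_mod_cast hxinv : ((1:ℤ):ℝ) < 1 / x))
      exact this
    have hflnn : (0:ℝ) ≤ (⌊1/x⌋ : ℝ) := by exact_mod_cast hfl1.trans' (by norm_num)
    set u : ℝ := t * (⌊1/x⌋ : ℝ) with hu
    have hunn : 0 ≤ u := mul_nonneg ht0.le hflnn
    have hcast : Complex.I * (t : ℂ) * (⌊1 / x⌋ : ℂ) = Complex.I * (u : ℂ) := by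
      push_cast [hu]; ring
    rw [hcast]
    have h1 := exp_I_sub_one_le u γ hunn hγ0 hγ1.le
    refine h1.trans ?_
    have hub : u ≤ t / x := by
      rw [hu, div_eq_mul_inv]
      refine mul_le_mul_of_nonneg_left ?_ ht0.le
      calc (⌊1/x⌋ : ℝ) ≤ 1 / x := Int.floor_le _
        _ = x⁻¹ := one_div x
    have : u ^ γ ≤ (t / x) ^ γ := Real.rpow_le_rpow hunn hub hγ0.le
    refine (mul_le_mul_of_nonneg_left this (by norm_num : (0:ℝ) ≤ 2)).trans ?_
    have heq : (t / x) ^ γ = t ^ γ * x ^ (-γ) := by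
      rw [div_eq_mul_inv, Real.mul_rpow ht0.le (by positivity),
        Real.inv_rpow hx0.le, Real.rpow_neg hx0.le]
    rw [hg]; rw [heq]; ring_nf; rfl
  -- integral comparison
  have hmono : (∫ x in Set.Ioo (0:ℝ) 1,
      ‖Complex.exp (Complex.I * (t : ℂ) * (⌊1 / x⌋ : ℂ)) - 1‖) ≤
      ∫ x in Set.Ioo (0:ℝ) 1, g x := by
    refine integral_mono_of_nonneg ?_ hgint ?_
    · exact Filter.Eventually.of_forall fun x => norm_nonneg _
    · filter_upwards [ae_restrict_mem measurableSet_Ioo] with x hx using hpt x hx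
  refine hmono.trans ?_
  -- compute the integral of g
  have hint : (∫ x in Set.Ioo (0:ℝ) 1, x ^ (-γ)) = 1 + L := by
    rw [← MeasureTheory.integral_Ioc_eq_integral_Ioo,
      ← intervalIntegral.integral_of_le (by norm_num : (0:ℝ) ≤ 1),
      integral_rpow (Or.inl hγ1')]
    rw [Real.one_rpow, Real.zero_rpow (by linarith : -γ + 1 ≠ 0)]
    have : -γ + 1 = 1 / (1 + L) := by simp [hγ]
    rw [this]
    field_simp
    norm_num
  have : (∫ x in Set.Ioo (0:ℝ) 1, g x) = 2 * t ^ γ * (1 + L) := by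
    rw [hg, MeasureTheory.integral_const_mul, hint]
  rw [this, hLabs]
  have h1 : 2 * t ^ γ * (1 + L) ≤ 2 * (Real.exp 1 * t) * (1 + L) := by
    have := mul_le_mul_of_nonneg_left htγ (by norm_num : (0:ℝ) ≤ 2)
    exact mul_le_mul_of_nonneg_right this h1L.le
  refine h1.trans ?_
  have h2 : 1 + L ≤ (1 + (Real.log 2)⁻¹) * L := by
    have : 1 ≤ (Real.log 2)⁻¹ * L := by
      rw [← div_eq_inv_mul, le_div_iff₀ hlog2]; linarith
    nlinarith
  calc 2 * (Real.exp 1 * t) * (1 + L)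
      ≤ 2 * (Real.exp 1 * t) * ((1 + (Real.log 2)⁻¹) * L) := by
        refine mul_le_mul_of_nonneg_left h2 (by positivity)
    _ = 2 * Real.exp 1 * (1 + (Real.log 2)⁻¹) * t * L := by ring
end

section
/- There exists a constant C such that for all t ∈ (0, 1/2), ∑_{n≥1} |e^{itn} − 1| / (n(n+1)) ≤ C · t · |log t|. -/
theorem stmt_13 : ∃ C : ℝ, ∀ t ∈ Set.Ioo (0:ℝ) (1/2),
    (∑' n : ℕ,
        ‖Complex.exp (Complex.I * (t : ℂ) * ((n : ℂ) + 1)) - 1‖ /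
          (((n : ℝ) + 1) * ((n : ℝ) + 2))) ≤
      C * t * |Real.log t| := by
  refine ⟨20, ?_⟩
  rintro t ⟨ht0, ht2⟩
  set f : ℕ → ℝ := fun n => ‖Complex.exp (Complex.I * (t : ℂ) * ((n : ℂ) + 1)) - 1‖ /
      (((n : ℝ) + 1) * ((n : ℝ) + 2)) with hf
  have hfnn : ∀ n, 0 ≤ f n := by intro n; positivity
  -- trivial bound on the numerator
  have hnorm : ∀ n : ℕ, ‖Complex.exp (Complex.I * (t : ℂ) * ((n : ℂ) + 1)) - 1‖ ≤ 2 := by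
    intro n
    calc ‖Complex.exp (Complex.I * (t : ℂ) * ((n : ℂ) + 1)) - 1‖
        ≤ ‖Complex.exp (Complex.I * (t : ℂ) * ((n : ℂ) + 1))‖ + ‖(1:ℂ)‖ := norm_sub_le _ _
      _ ≤ 2 := by
        rw [Complex.norm_exp]
        have hre : (Complex.I * (t : ℂ) * ((n : ℂ) + 1)).re = 0 := by simp
        rw [hre, Real.exp_zero]
        norm_num
  have hfle : ∀ n, f n ≤ 2 / (((n : ℝ) + 1) * ((n : ℝ) + 2)) := by
    intro n
    apply div_le_div_of_nonneg_right (hnorm n) (by positivity) |>.trans_eq rfl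
  have hgsum : Summable (fun n : ℕ => 2 / (((n : ℝ) + 1) * ((n : ℝ) + 2))) := by
    have h1 : Summable (fun n : ℕ => 2 / ((n : ℝ) + 1) ^ 2) := by
      have := (Real.summable_one_div_nat_pow (p := 2)).mpr one_lt_two
      have h2 := (summable_nat_add_iff 1).mpr this
      have h3 : (fun n : ℕ => 1 / ((n : ℝ) + 1) ^ 2) = fun n : ℕ => 1 / ((n + 1 : ℕ) : ℝ) ^ 2 := by
        funext n; push_cast; ring
      simpa [h3, div_eq_mul_inv] using h2.mul_left 2
    refine Summable.of_nonneg_of_le (fun n => by positivity) (fun n => ?_) h1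
    rw [div_le_div_iff₀ (by positivity) (by positivity)]
    nlinarith [Nat.cast_nonneg (α := ℝ) n]
  have hsum : Summable f := Summable.of_nonneg_of_le hfnn hfle hgsum
  set N : ℕ := ⌊1 / t⌋₊ with hN
  have hNle : (N : ℝ) ≤ 1 / t := Nat.floor_le (by positivity)
  have hNgt : 1 / t < (N : ℝ) + 1 := by exact_mod_cast Nat.lt_floor_add_one (1 / t)
  have hN1 : 1 ≤ N := by
    rw [hN, Nat.le_floor_iff (by positivity)]
    push_cast
    rw [le_div_iff₀ ht0]
    linarith
  have htN : t * (N : ℝ) ≤ 1 := by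
    have h := mul_le_mul_of_nonneg_left hNle ht0.le
    rwa [mul_one_div, div_self ht0.ne'] at h
  have hlogt : Real.log 2 ≤ |Real.log t| := by
    have h1 : Real.log t < 0 := Real.log_neg ht0 (by linarith)
    rw [abs_of_neg h1]
    have := Real.log_le_log (by positivity : (0:ℝ) < t) (le_of_lt ht2)
    rw [show (1:ℝ)/2 = 2⁻¹ by norm_num, Real.log_inv] at this
    linarith
  have hlog2 : (0:ℝ) < Real.log 2 := Real.log_pos one_lt_two
  -- split the sum
  rw [← Summable.sum_add_tsum_nat_add N hsum]
  -- head estimate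
  have hhead : ∑ i ∈ Finset.range N, f i ≤ 2 * t * (1 + |Real.log t|) := by
    have step : ∀ i ∈ Finset.range N, f i ≤ 2 * t * (1 / ((i : ℝ) + 1)) := by
      intro i hi
      rw [Finset.mem_range] at hi
      have hcast : t * ((i : ℝ) + 1) ≤ 1 := by
        have : (i : ℝ) + 1 ≤ (N : ℝ) := by exact_mod_cast Nat.succ_le_of_lt hi
        nlinarith
      have habs : ‖Complex.I * (t : ℂ) * ((i : ℂ) + 1)‖ = t * ((i : ℝ) + 1) := by
        rw [norm_mul, norm_mul, Complex.norm_I, Complex.norm_of_nonneg ht0.le,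
          show ((i : ℂ) + 1) = ((i + 1 : ℕ) : ℂ) by push_cast; ring, Complex.norm_natCast]
        push_cast
        ring
      have hb := Complex.norm_exp_sub_one_le (x := Complex.I * (t : ℂ) * ((i : ℂ) + 1))
        (by rw [habs]; exact hcast)
      rw [habs] at hb
      have : f i ≤ (2 * (t * ((i : ℝ) + 1))) / (((i : ℝ) + 1) * ((i : ℝ) + 2)) := by
        apply div_le_div_of_nonneg_right _ (by positivity)
        exact hb
      refine this.trans ?_
      have hi1 : (0:ℝ) < (i : ℝ) + 1 := by positivity
      rw [mul_one_div, div_le_div_iff₀ (by positivity) (by positivity)]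
      nlinarith [Nat.cast_nonneg (α := ℝ) i, mul_pos ht0 hi1]
    calc ∑ i ∈ Finset.range N, f i ≤ ∑ i ∈ Finset.range N, 2 * t * (1 / ((i : ℝ) + 1)) :=
          Finset.sum_le_sum step
      _ = 2 * t * ∑ i ∈ Finset.range N, (1 / ((i : ℝ) + 1)) := by rw [Finset.mul_sum]
      _ ≤ 2 * t * (1 + |Real.log t|) := by
          apply mul_le_mul_of_nonneg_left _ (by positivity)
          have hH : ∑ i ∈ Finset.range N, (1 / ((i : ℝ) + 1)) = (harmonic N : ℝ) := by
            rw [harmonic]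
            push_cast
            apply Finset.sum_congr rfl
            intro i _
            rw [one_div]
          rw [hH]
          refine (harmonic_le_one_add_log N).trans ?_
          have hNpos : (0:ℝ) < (N : ℝ) := by exact_mod_cast hN1
          have hlogN : Real.log N ≤ Real.log (1 / t) := Real.log_le_log hNpos hNle
          rw [one_div, Real.log_inv] at hlogN
          have : Real.log t < 0 := Real.log_neg ht0 (by linarith)
          rw [abs_of_neg this]
          linarith
  -- tail estimate
  have htail : (∑' i : ℕ, f (i + N)) ≤ 2 * t := by
    have hb : ∀ n : ℕ, ∑ i ∈ Finset.range n, f (i + N) ≤ 2 * t := by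
      intro n
      have step : ∀ i ∈ Finset.range n,
          f (i + N) ≤ 2 / ((i : ℝ) + (N : ℝ) + 1) - 2 / ((i : ℝ) + (N : ℝ) + 2) := by
        intro i _
        refine (hfle (i + N)).trans_eq ?_
        have h1 : (0:ℝ) < (i : ℝ) + (N : ℝ) + 1 := by positivity
        have h2 : (0:ℝ) < (i : ℝ) + (N : ℝ) + 2 := by positivity
        push_cast
        field_simp
        ring
      calc ∑ i ∈ Finset.range n, f (i + N)
          ≤ ∑ i ∈ Finset.range n, (2 / ((i : ℝ) + (N : ℝ) + 1) - 2 / ((i : ℝ) + (N : ℝ) + 2)) :=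
            Finset.sum_le_sum step
        _ = 2 / ((N : ℝ) + 1) - 2 / ((n : ℝ) + (N : ℝ) + 1) := by
            have := Finset.sum_range_sub' (fun i : ℕ => 2 / ((i : ℝ) + (N : ℝ) + 1)) n
            simp only [Nat.cast_zero, zero_add] at this
            rw [← this]
            apply Finset.sum_congr rfl
            intro i _
            push_cast
            ring_nf
        _ ≤ 2 / ((N : ℝ) + 1) := by
            have : (0:ℝ) ≤ 2 / ((n : ℝ) + (N : ℝ) + 1) := by positivity
            linarith
        _ ≤ 2 * t := by
            rw [div_le_iff₀ (by positivity)]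
            rw [div_lt_iff₀ ht0] at hNgt
            nlinarith
    exact Real.tsum_le_of_sum_range_le (fun n => hfnn _) hb
  -- combine
  have h1le : 1 ≤ |Real.log t| / Real.log 2 := by
    rw [le_div_iff₀ hlog2]; linarith
  have hlog2' : Real.log 2 ≥ 0.6931 := by
    have := Real.log_two_gt_d9
    linarith
  have habs0 : 0 < |Real.log t| := lt_of_lt_of_le hlog2 hlogt
  calc ∑ i ∈ Finset.range N, f i + ∑' i : ℕ, f (i + N)
      ≤ 2 * t * (1 + |Real.log t|) + 2 * t := by linarith
    _ ≤ 20 * t * |Real.log t| := by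
        have h1 : (1:ℝ) ≤ |Real.log t| / Real.log 2 := h1le
        have h2 : |Real.log t| / Real.log 2 ≤ 2 * |Real.log t| := by
          rw [div_le_iff₀ hlog2]
          nlinarith
        have h3 : (1:ℝ) ≤ 2 * |Real.log t| := h1.trans h2
        nlinarith
end

section
/- Let μ be a probability measure on [0,1] with density f ∈ C¹([0,1]) with respect to Lebesgue measure, and let a ≠ 0, β = 1, λ = 0, i.e. φ(x) = a/x on (0,1]. Then as t → 0⁺, ∫₀¹ (e^{itφ(x)} − 1) dμ(x) = c_* t |log t| + O_ε(t |log t|^ε) for any ε ∈ (0,1), where c_* = −f(0) |a| e^{−πi sgn(a)/2}. -/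
open MeasureTheory

lemma hexp2 (r : ℝ) : ‖Complex.exp (Complex.I * r) - 1‖ ≤ 2 := by
  calc ‖Complex.exp (Complex.I * r) - 1‖ ≤ ‖Complex.exp (Complex.I * r)‖ + ‖(1:ℂ)‖ :=
        norm_sub_le _ _
    _ ≤ 2 := by
        have : ‖Complex.exp (Complex.I * r)‖ = 1 := by
          rw [Complex.norm_exp]
          simp [Complex.mul_re]
        rw [this]; norm_num

lemma hexp_lin (r : ℝ) (hr : |r| ≤ 1) : ‖Complex.exp (Complex.I * r) - 1‖ ≤ 2 * |r| := by
  have h : ‖Complex.I * r‖ ≤ 1 := by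
    simpa [Complex.norm_real] using hr
  have := Complex.norm_exp_sub_one_le h
  simpa [Complex.norm_real] using this

lemma hexp_sq (r : ℝ) (hr : |r| ≤ 1) :
    ‖Complex.exp (Complex.I * r) - 1 - Complex.I * r‖ ≤ (3/4) * r ^ 2 := by
  have h : ‖Complex.I * r‖ ≤ 1 := by
    simpa [Complex.norm_real] using hr
  have h2 := Complex.exp_bound h (by norm_num : 0 < 2)
  have hsum : (∑ i ∈ Finset.range 2, (Complex.I * r) ^ i / i.factorial)
      = 1 + Complex.I * r := by
    simp [Finset.sum_range_succ]
  rw [hsum] at h2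
  have habs : ‖Complex.I * r‖ = |r| := by
    simp [Complex.norm_real]
  rw [habs] at h2
  calc ‖Complex.exp (Complex.I * r) - 1 - Complex.I * r‖
      = ‖Complex.exp (Complex.I * r) - (1 + Complex.I * r)‖ := by
        ring_nf
    _ ≤ |r| ^ 2 * (((Nat.succ 2 : ℕ) : ℝ) * (((Nat.factorial 2 : ℕ) : ℝ) * ((2:ℕ):ℝ))⁻¹) := h2
    _ = (3/4) * r ^ 2 := by
        rw [sq_abs]; norm_num [Nat.factorial]; ring

lemma hcstar (a : ℝ) (ha : a ≠ 0) (w : ℂ) :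
    -w * ((|a| : ℝ) : ℂ) * Complex.exp (-(Real.pi : ℂ) * Complex.I * ((Real.sign a : ℝ) : ℂ) / 2)
      = Complex.I * w * (a : ℂ) := by
  rcases ha.lt_or_gt with hneg | hpos
  · rw [Real.sign_of_neg hneg, abs_of_neg hneg]
    have h1 : (-(Real.pi:ℂ) * Complex.I * (((-1:ℝ)):ℂ) / 2) = ((Real.pi/2 : ℝ):ℂ) * Complex.I := by
      push_cast; ring
    rw [h1, Complex.exp_mul_I, ← Complex.ofReal_cos, ← Complex.ofReal_sin,
      Real.cos_pi_div_two, Real.sin_pi_div_two]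
    push_cast; ring
  · rw [Real.sign_of_pos hpos, abs_of_pos hpos]
    have h1 : (-(Real.pi:ℂ) * Complex.I * (((1:ℝ)):ℂ) / 2) = ((-(Real.pi/2) : ℝ):ℂ) * Complex.I := by
      push_cast; ring
    rw [h1, Complex.exp_mul_I, ← Complex.ofReal_cos, ← Complex.ofReal_sin,
      Real.cos_neg, Real.sin_neg, Real.cos_pi_div_two, Real.sin_pi_div_two]
    push_cast; ring

lemma notmem_uIcc (m : ℝ) (h0 : 0 < m) (h1 : m ≤ 1) : (0:ℝ) ∉ Set.uIcc m 1 := by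
  rw [Set.uIcc_of_le h1]
  intro h; exact absurd h.1 (not_le.mpr h0)

lemma hlog_int (m : ℝ) (h0 : 0 < m) (h1 : m ≤ 1) :
    ∫ x in Set.Ioo m 1, 1/x = Real.log (1/m) := by
  rw [← integral_Ioc_eq_integral_Ioo, ← intervalIntegral.integral_of_le h1,
    integral_one_div (notmem_uIcc m h0 h1)]

lemma hzpow_int (m : ℝ) (h0 : 0 < m) (h1 : m ≤ 1) :
    ∫ x in Set.Ioo m 1, (x:ℝ)^(-2:ℤ) = m⁻¹ - 1 := by
  rw [← integral_Ioc_eq_integral_Ioo, ← intervalIntegral.integral_of_le h1,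
    integral_zpow (Or.inr ⟨by norm_num, notmem_uIcc m h0 h1⟩)]
  norm_num
  ring

lemma hzpow_integrable (m : ℝ) (h0 : 0 < m) (h1 : m ≤ 1) :
    IntegrableOn (fun x : ℝ => x^(-2:ℤ)) (Set.Ioo m 1) := by
  have := (intervalIntegral.intervalIntegrable_zpow (n := -2) (a := m) (b := 1)
    (μ := volume) (Or.inr (notmem_uIcc m h0 h1)))
  rw [intervalIntegrable_iff_integrableOn_Ioc_of_le h1] at this
  exact this.mono_set Set.Ioo_subset_Ioc_self

set_option maxHeartbeats 1600000 in
theorem stmt_18 (f : ℝ → ℝ) (hf : ContDiffOn ℝ 1 f (Set.Icc 0 1))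
    (hf0 : ∀ x ∈ Set.Icc (0:ℝ) 1, 0 ≤ f x)
    (hprob : ∫ x in Set.Ioo (0:ℝ) 1, f x = 1)
    (a : ℝ) (ha : a ≠ 0)
    (ε : ℝ) (hε : ε ∈ Set.Ioo (0:ℝ) 1) :
    ∃ C > (0:ℝ), ∃ t₀ > (0:ℝ), ∀ t : ℝ, 0 < t → t < t₀ →
    ‖(∫ x in Set.Ioo (0:ℝ) 1,
          (Complex.exp (Complex.I * (t : ℂ) * ((a / x : ℝ) : ℂ)) - 1) * (f x : ℂ)) -
        (-(f 0 : ℂ) * (|a| : ℝ) *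
            Complex.exp (-(Real.pi : ℂ) * Complex.I * (Real.sign a : ℂ) / 2)) *
          ((t * |Real.log t| : ℝ) : ℂ)‖ ≤
      C * t * |Real.log t| ^ ε := by
  obtain ⟨hε0, hε1⟩ := hε
  -- Lipschitz bound for f
  have hUD : UniqueDiffOn ℝ (Set.Icc (0:ℝ) 1) := uniqueDiffOn_Icc one_pos
  have hd : DifferentiableOn ℝ f (Set.Icc 0 1) := hf.differentiableOn one_ne_zero
  obtain ⟨L0, hL0⟩ := isCompact_Icc.exists_bound_of_continuousOn
    (hf.continuousOn_derivWithin hUD le_rfl)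
  set L := max L0 0 with hLdef
  have hLnn : 0 ≤ L := le_max_right _ _
  have hLb : ∀ y ∈ Set.Icc (0:ℝ) 1, ‖derivWithin f (Set.Icc 0 1) y‖ ≤ L :=
    fun y hy => (hL0 y hy).trans (le_max_left L0 0)
  have hlip : ∀ x ∈ Set.Icc (0:ℝ) 1, |f x - f 0| ≤ L * x := by
    intro x hx
    have h0m : (0:ℝ) ∈ Set.Icc (0:ℝ) 1 := by constructor <;> norm_num
    have := Convex.norm_image_sub_le_of_norm_derivWithin_le hd hLb (convex_Icc _ _) h0m hx
    simpa [Real.norm_eq_abs, abs_of_nonneg hx.1] using this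
  set A := |a| with hAdef
  have hA : 0 < A := abs_pos.mpr ha
  set M := |f 0| with hMdef
  have hMnn : 0 ≤ M := abs_nonneg _
  have hMnorm : ‖((f 0 : ℝ) : ℂ)‖ = M := by
    rw [hMdef, Complex.norm_real, Real.norm_eq_abs]
  set C0 : ℝ := M*(2*A) + M*((3/4)*A) + 2*L*A + M*(A*|Real.log A|) with hC0
  have hC0nn : 0 ≤ C0 := by positivity
  refine ⟨C0 + 1, by positivity, min (Real.exp (-1)) (1/(2*A)), by positivity, ?_⟩
  intro t ht ht0
  have hte : t < Real.exp (-1) := lt_of_lt_of_le ht0 (min_le_left _ _)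
  have ht2 : t < 1/(2*A) := lt_of_lt_of_le ht0 (min_le_right _ _)
  have hexpneg : Real.exp (-1) < 1 := by
    rw [← Real.exp_zero]; exact Real.exp_lt_exp.mpr (by norm_num)
  have ht1 : t < 1 := hte.trans hexpneg
  have hlogt_neg : Real.log t < 0 := Real.log_neg ht ht1
  have habslog : |Real.log t| = -Real.log t := abs_of_neg hlogt_neg
  have hlog1 : 1 ≤ |Real.log t| := by
    rw [habslog]
    have h1 : Real.log t ≤ Real.log (Real.exp (-1)) := Real.log_le_log ht hte.le
    rw [Real.log_exp] at h1
    linarith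
  set m := t * A with hmdef
  have hm0 : 0 < m := mul_pos ht hA
  have hm1 : m < 1 := by
    rw [lt_div_iff₀ (by positivity)] at ht2
    rw [hmdef]; nlinarith
  have hmle : m ≤ 1 := hm1.le
  -- the oscillatory factor and its linearization
  set g : ℝ → ℂ := fun x => Complex.exp (Complex.I * (t:ℂ) * ((a/x : ℝ):ℂ)) - 1 with hgdef
  set h : ℝ → ℂ := fun x => Complex.I * (t:ℂ) * ((a/x : ℝ):ℂ) with hhdef
  have hcast : ∀ x : ℝ, Complex.I * (t:ℂ) * ((a/x : ℝ):ℂ) = Complex.I * ((t*(a/x) : ℝ) : ℂ) := by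
    intro x; push_cast; ring
  have hg_meas : Measurable g := by
    apply Measurable.sub _ measurable_const
    exact Complex.measurable_exp.comp
      (measurable_const.mul (Complex.measurable_ofReal.comp (measurable_const.div measurable_id)))
  have hh_meas : Measurable h :=
    measurable_const.mul (Complex.measurable_ofReal.comp (measurable_const.div measurable_id))
  have hg_bd : ∀ x : ℝ, ‖g x‖ ≤ 2 := by
    intro x; rw [hgdef]; simp only; rw [hcast x]; exact hexp2 _
  have hgint : ∀ s : Set ℝ, volume s < ⊤ → IntegrableOn g s := by
    intro s hs
    exact Integrable.mono' (integrableOn_const hs.ne)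
      hg_meas.aestronglyMeasurable.restrict (ae_of_all _ hg_bd)
  have habsr : ∀ x : ℝ, 0 < x → |t * (a/x)| = m / x := by
    intro x hx0
    rw [abs_mul, abs_of_pos ht, abs_div, abs_of_pos hx0, hmdef, hAdef]
    ring
  have hrbound : ∀ x ∈ Set.Ioo m 1, |t * (a/x)| ≤ 1 := by
    intro x hx
    have hx0 : 0 < x := lt_trans hm0 hx.1
    rw [habsr x hx0, div_le_one hx0]
    exact hx.1.le
  have hh_bd : ∀ x ∈ Set.Ioo m 1, ‖h x‖ ≤ 1 := by
    intro x hx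
    have : ‖h x‖ = |t * (a/x)| := by
      rw [hhdef]; simp only; rw [hcast x]
      simp [Complex.norm_real, abs_mul, abs_div]
    rw [this]; exact hrbound x hx
  have hhint : IntegrableOn h (Set.Ioo m 1) := by
    refine Integrable.mono'
      ((integrableOn_const measure_Ioo_lt_top.ne) :
        IntegrableOn (fun _ : ℝ => (1:ℝ)) (Set.Ioo m 1) volume)
      hh_meas.aestronglyMeasurable.restrict ?_
    exact (ae_restrict_iff' measurableSet_Ioo).mpr (ae_of_all _ hh_bd)
  have hfi : IntegrableOn (fun x => ((f x : ℝ) : ℂ)) (Set.Ioo 0 1) :=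
    (((hf.continuousOn.integrableOn_Icc).mono_set Set.Ioo_subset_Icc_self)).ofReal
  have hfc : IntegrableOn (fun x => ((f x : ℝ):ℂ) - ((f 0:ℝ):ℂ)) (Set.Ioo 0 1) :=
    hfi.sub (integrableOn_const measure_Ioo_lt_top.ne)
  have hgf_int : IntegrableOn (fun x => g x * ((f x:ℝ):ℂ)) (Set.Ioo 0 1) :=
    hfi.bdd_mul hg_meas.aestronglyMeasurable.restrict (ae_of_all _ hg_bd)
  have hgsub_int : IntegrableOn (fun x => g x * (((f x:ℝ):ℂ) - ((f 0:ℝ):ℂ))) (Set.Ioo 0 1) :=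
    hfc.bdd_mul hg_meas.aestronglyMeasurable.restrict (ae_of_all _ hg_bd)
  have hgc_int : IntegrableOn (fun x => g x * ((f 0:ℝ):ℂ)) (Set.Ioo 0 1) :=
    (hgint _ measure_Ioo_lt_top).mul_const _
  -- step 1 : separate constant part of density
  have step1 : (∫ x in Set.Ioo (0:ℝ) 1, g x * ((f x:ℝ):ℂ))
      = ((f 0:ℝ):ℂ) * (∫ x in Set.Ioo (0:ℝ) 1, g x)
        + ∫ x in Set.Ioo (0:ℝ) 1, g x * (((f x:ℝ):ℂ) - ((f 0:ℝ):ℂ)) := by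
    have heq : (fun x => g x * ((f x:ℝ):ℂ))
        = fun x => g x * ((f 0:ℝ):ℂ) + g x * (((f x:ℝ):ℂ) - ((f 0:ℝ):ℂ)) := by
      funext x; ring
    rw [heq, integral_add hgc_int hgsub_int, integral_mul_const]
    ring
  -- step 2 : split the domain at m
  have hdisj : Disjoint (Set.Ioo (0:ℝ) m) (Set.Ico m 1) := by
    rw [Set.disjoint_left]
    rintro x hx1 hx2
    exact absurd hx2.1 (not_le.mpr hx1.2)
  have hunion : Set.Ioo (0:ℝ) m ∪ Set.Ico m 1 = Set.Ioo (0:ℝ) 1 :=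
    Set.Ioo_union_Ico_eq_Ioo hm0 hmle
  have step2 : (∫ x in Set.Ioo (0:ℝ) 1, g x)
      = (∫ x in Set.Ioo (0:ℝ) m, g x) + ∫ x in Set.Ioo m 1, g x := by
    rw [← hunion, setIntegral_union hdisj measurableSet_Ico (hgint _ measure_Ioo_lt_top)
      (hgint _ measure_Ico_lt_top), integral_Ico_eq_integral_Ioo]
  -- step 3 : linearize on (m, 1)
  have step3 : (∫ x in Set.Ioo m 1, g x)
      = (∫ x in Set.Ioo m 1, (g x - h x)) + ∫ x in Set.Ioo m 1, h x := by
    rw [integral_sub (hgint _ measure_Ioo_lt_top) hhint]; ring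
  -- step 4 : value of the linear integral
  have step4 : (∫ x in Set.Ioo m 1, h x)
      = Complex.I * (t:ℂ) * (a:ℂ) * ((Real.log (1/m) : ℝ) : ℂ) := by
    have h1 : h = fun x : ℝ => (Complex.I * (t:ℂ) * (a:ℂ)) * ((1/x : ℝ):ℂ) := by
      funext x; rw [hhdef]; push_cast; ring
    rw [h1, integral_const_mul]
    congr 1
    rw [show (∫ x in Set.Ioo m 1, ((1/x : ℝ):ℂ)) = (((∫ x in Set.Ioo m 1, 1/x : ℝ)):ℂ)
      from integral_ofReal, hlog_int m hm0 hmle]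
  -- bounds
  have hvol : ∀ u v : ℝ, u ≤ v → (volume (Set.Ioo u v)).toReal = v - u := by
    intro u v huv
    rw [Real.volume_Ioo, ENNReal.toReal_ofReal (by linarith)]
  have bound1 : ‖∫ x in Set.Ioo (0:ℝ) m, g x‖ ≤ 2 * m := by
    have := norm_setIntegral_le_of_norm_le_const (C := 2) (μ := volume)
      (s := Set.Ioo 0 m) measure_Ioo_lt_top (fun x _ => hg_bd x)
    rwa [measureReal_def, hvol 0 m hm0.le, sub_zero] at this
  have bound2 : ‖∫ x in Set.Ioo (0:ℝ) 1, g x * (((f x:ℝ):ℂ) - ((f 0:ℝ):ℂ))‖ ≤ 2*L*m := by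
    have hb : ∀ x ∈ Set.Ioo (0:ℝ) 1, ‖g x * (((f x:ℝ):ℂ) - ((f 0:ℝ):ℂ))‖ ≤ 2*L*m := by
      intro x hx
      have hx0 : 0 < x := hx.1
      have hxI : x ∈ Set.Icc (0:ℝ) 1 := ⟨hx.1.le, hx.2.le⟩
      have hfsub : ‖((f x:ℝ):ℂ) - ((f 0:ℝ):ℂ)‖ ≤ L * x := by
        rw [← Complex.ofReal_sub, Complex.norm_real, Real.norm_eq_abs]
        exact hlip x hxI
      rw [norm_mul]
      rcases le_or_gt x m with hxm | hxm
      · calc ‖g x‖ * ‖((f x:ℝ):ℂ) - ((f 0:ℝ):ℂ)‖ ≤ 2 * (L * x) :=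
              mul_le_mul (hg_bd x) hfsub (norm_nonneg _) (by norm_num)
          _ ≤ 2*L*m := by nlinarith
      · have hr : |t * (a/x)| ≤ 1 := hrbound x ⟨hxm, hx.2⟩
        have hg' : ‖g x‖ ≤ 2 * |t*(a/x)| := by
          rw [hgdef]; simp only; rw [hcast x]; exact hexp_lin _ hr
        calc ‖g x‖ * ‖((f x:ℝ):ℂ) - ((f 0:ℝ):ℂ)‖ ≤ (2 * |t*(a/x)|) * (L * x) :=
              mul_le_mul hg' hfsub (norm_nonneg _) (by positivity)
          _ = 2*L*m := by
              have hxne : x ≠ 0 := ne_of_gt hx0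
              rw [habsr x hx0]
              field_simp
              try ring
    have := norm_setIntegral_le_of_norm_le_const (μ := volume)
      (s := Set.Ioo 0 1) measure_Ioo_lt_top hb
    rwa [measureReal_def, hvol 0 1 (by norm_num), sub_zero, mul_one] at this
  have bound3 : ‖∫ x in Set.Ioo m 1, (g x - h x)‖ ≤ (3/4) * m := by
    have hb : ∀ x ∈ Set.Ioo m 1, ‖g x - h x‖ ≤ (3/4)*(t*a)^2 * x^(-2:ℤ) := by
      intro x hx
      have hx0 : 0 < x := lt_trans hm0 hx.1
      have heq : g x - h x = Complex.exp (Complex.I * ((t*(a/x):ℝ):ℂ)) - 1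
          - Complex.I * ((t*(a/x):ℝ):ℂ) := by
        rw [hgdef, hhdef]; simp only; rw [hcast x]
      rw [heq]
      calc ‖Complex.exp (Complex.I * ((t*(a/x):ℝ):ℂ)) - 1 - Complex.I * ((t*(a/x):ℝ):ℂ)‖
          ≤ (3/4) * (t*(a/x))^2 := hexp_sq _ (hrbound x hx)
        _ = (3/4)*(t*a)^2 * x^(-2:ℤ) := by
            have hxne : x ≠ 0 := ne_of_gt hx0
            rw [zpow_neg, show ((2:ℤ) = ((2:ℕ):ℤ)) from rfl, zpow_natCast]
            field_simp
            try ring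
    have hBint : IntegrableOn (fun x:ℝ => (3/4)*(t*a)^2 * x^(-2:ℤ)) (Set.Ioo m 1) :=
      (hzpow_integrable m hm0 hmle).const_mul _
    have hae : ∀ᵐ x ∂(volume.restrict (Set.Ioo m 1)), ‖g x - h x‖ ≤ (3/4)*(t*a)^2 * x^(-2:ℤ) :=
      (ae_restrict_iff' measurableSet_Ioo).mpr (ae_of_all _ hb)
    have hstep := norm_integral_le_of_norm_le hBint hae
    have hval : (∫ x in Set.Ioo m 1, (3/4)*(t*a)^2 * x^(-2:ℤ)) = (3/4)*(t*a)^2 * (m⁻¹ - 1) := by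
      rw [integral_const_mul, hzpow_int m hm0 hmle]
    rw [hval] at hstep
    have hsq : (t*a)^2 = m^2 := by
      rw [hmdef, hAdef, mul_pow, mul_pow, sq_abs]
    refine hstep.trans ?_
    rw [hsq]
    have hmm : m^2 * (m⁻¹ - 1) = m - m^2 := by
      rw [mul_sub, mul_one, sq, mul_assoc, mul_inv_cancel₀ (ne_of_gt hm0), mul_one]
    rw [mul_assoc, hmm]
    have hm2 : 0 ≤ m^2 := sq_nonneg m
    linarith
  -- main identity
  have hcmain : (-(f 0 : ℂ) * ((|a|:ℝ) : ℂ) *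
      Complex.exp (-(Real.pi : ℂ) * Complex.I * ((Real.sign a : ℝ) : ℂ) / 2))
      = Complex.I * ((f 0:ℝ):ℂ) * (a:ℂ) := hcstar a ha _
  have hlogm : Real.log (1/m) = |Real.log t| - Real.log A := by
    rw [one_div, Real.log_inv, hmdef, Real.log_mul (ne_of_gt ht) (ne_of_gt hA), habslog]
    ring
  have combo : (∫ x in Set.Ioo (0:ℝ) 1, g x * ((f x:ℝ):ℂ))
      - (Complex.I * ((f 0:ℝ):ℂ) * (a:ℂ)) * (((t * |Real.log t| : ℝ)):ℂ)
      = ((f 0:ℝ):ℂ) * (∫ x in Set.Ioo (0:ℝ) m, g x)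
        + ((f 0:ℝ):ℂ) * (∫ x in Set.Ioo m 1, (g x - h x))
        + (∫ x in Set.Ioo (0:ℝ) 1, g x * (((f x:ℝ):ℂ) - ((f 0:ℝ):ℂ)))
        + ((f 0:ℝ):ℂ) * (Complex.I * (t:ℂ) * (a:ℂ)) * ((-Real.log A : ℝ):ℂ) := by
    rw [step1, step2, step3, step4, hlogm]
    push_cast
    ring
  -- final estimate
  have hEeq : (∫ x in Set.Ioo (0:ℝ) 1,
      (Complex.exp (Complex.I * (t : ℂ) * ((a / x : ℝ) : ℂ)) - 1) * ((f x : ℝ) : ℂ))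
      = ∫ x in Set.Ioo (0:ℝ) 1, g x * ((f x:ℝ):ℂ) := rfl
  rw [hEeq, hcmain, combo]
  have hT4 : ‖((f 0:ℝ):ℂ) * (Complex.I * (t:ℂ) * (a:ℂ)) * ((-Real.log A : ℝ):ℂ)‖
      = M * (t * A * |Real.log A|) := by
    rw [norm_mul, norm_mul, hMnorm]
    simp [Complex.norm_real, Complex.norm_I,
      abs_of_pos ht, hAdef]
    ring
  have hsum : ‖((f 0:ℝ):ℂ) * (∫ x in Set.Ioo (0:ℝ) m, g x)
        + ((f 0:ℝ):ℂ) * (∫ x in Set.Ioo m 1, (g x - h x))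
        + (∫ x in Set.Ioo (0:ℝ) 1, g x * (((f x:ℝ):ℂ) - ((f 0:ℝ):ℂ)))
        + ((f 0:ℝ):ℂ) * (Complex.I * (t:ℂ) * (a:ℂ)) * ((-Real.log A : ℝ):ℂ)‖
      ≤ M * (2*m) + M * ((3/4)*m) + 2*L*m + M * (t * A * |Real.log A|) := by
    calc ‖_ + _ + _ + _‖
        ≤ ‖((f 0:ℝ):ℂ) * (∫ x in Set.Ioo (0:ℝ) m, g x)
            + ((f 0:ℝ):ℂ) * (∫ x in Set.Ioo m 1, (g x - h x))
            + (∫ x in Set.Ioo (0:ℝ) 1, g x * (((f x:ℝ):ℂ) - ((f 0:ℝ):ℂ)))‖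
          + ‖((f 0:ℝ):ℂ) * (Complex.I * (t:ℂ) * (a:ℂ)) * ((-Real.log A : ℝ):ℂ)‖ :=
          norm_add_le _ _
      _ ≤ (‖((f 0:ℝ):ℂ) * (∫ x in Set.Ioo (0:ℝ) m, g x)
            + ((f 0:ℝ):ℂ) * (∫ x in Set.Ioo m 1, (g x - h x))‖
          + ‖∫ x in Set.Ioo (0:ℝ) 1, g x * (((f x:ℝ):ℂ) - ((f 0:ℝ):ℂ))‖)
          + ‖((f 0:ℝ):ℂ) * (Complex.I * (t:ℂ) * (a:ℂ)) * ((-Real.log A : ℝ):ℂ)‖ := by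
          gcongr
          exact norm_add_le _ _
      _ ≤ ((‖((f 0:ℝ):ℂ) * (∫ x in Set.Ioo (0:ℝ) m, g x)‖
            + ‖((f 0:ℝ):ℂ) * (∫ x in Set.Ioo m 1, (g x - h x))‖)
          + ‖∫ x in Set.Ioo (0:ℝ) 1, g x * (((f x:ℝ):ℂ) - ((f 0:ℝ):ℂ))‖)
          + ‖((f 0:ℝ):ℂ) * (Complex.I * (t:ℂ) * (a:ℂ)) * ((-Real.log A : ℝ):ℂ)‖ := by
          gcongr
          exact norm_add_le _ _
      _ ≤ M * (2*m) + M * ((3/4)*m) + 2*L*m + M * (t * A * |Real.log A|) := by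
          rw [hT4, norm_mul, norm_mul, hMnorm]
          have b1 := bound1
          have b2 := bound2
          have b3 := bound3
          nlinarith [norm_nonneg (∫ x in Set.Ioo (0:ℝ) m, g x),
            norm_nonneg (∫ x in Set.Ioo m 1, (g x - h x))]
  refine hsum.trans ?_
  have hrpow : 1 ≤ |Real.log t| ^ ε := Real.one_le_rpow hlog1 hε0.le
  have htotal : M * (2*m) + M * ((3/4)*m) + 2*L*m + M * (t * A * |Real.log A|) = C0 * t := by
    rw [hC0, hmdef]; ring
  rw [htotal]
  have h1 : C0 * t ≤ (C0 + 1) * t := by nlinarith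
  have h2 : (C0 + 1) * t ≤ (C0 + 1) * t * |Real.log t| ^ ε := by
    nlinarith [mul_pos (by positivity : (0:ℝ) < (C0+1)) ht]
  linarith
end
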